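/- η-law for xCL_fg (value form): for every value v, v ≲ctx S''([K'([I])],[v]) and S''([K'([I])],[v]) ≲ctx v (both in the value sort). -/

import Mathlib

namespace FG

mutual
/-- Values of the fine-grain call-by-value combinatory logic xCL_fg. -/
inductive V : Type
  | I : V
  | K : V
  | S : V
  | K1 (t : C) : V
  | S1 (t : C) : V
  | S2 (s t : C) : V
/-- Computations of xCL_fg. -/
inductive C : Type
  | ret (v : V) : C            -- [v]
  | bull (t s : C) : C         -- t • s
  | rtri (v : V) (s : C) : C   -- v ▷ s
  | ltri (t : C) (v : V) : C   -- t ◁ v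
  | circ (v w : V) : C         -- v ∘ w
end

/-- Labeled transitions `v —u→ t` from values to computations (`LStep v u t`). -/
inductive LStep : V → V → C → Prop
  | S (v : V) : LStep .S v (.ret (.S1 (.ret v)))
  | S1 (t : C) (v : V) : LStep (.S1 t) v (.ret (.S2 t (.ret v)))
  | S2 (t s : C) (v : V) : LStep (.S2 t s) v (.bull (.ltri t v) (.ltri s v))
  | K (v : V) : LStep .K v (.ret (.K1 (.ret v)))
  | K1 (t : C) (v : V) : LStep (.K1 t) v t
  | I (v : V) : LStep .I v (.ret v)

/-- Unlabeled transitions from computations to values: `t → v`. -/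
inductive StepV : C → V → Prop
  | ret (v : V) : StepV (.ret v) v

/-- Unlabeled transitions from computations to computations: `t → t'`. -/
inductive StepC : C → C → Prop
  | bullL {t t' : C} (s : C) : StepC t t' → StepC (.bull t s) (.bull t' s)
  | bullV {t : C} {v : V} (s : C) : StepV t v → StepC (.bull t s) (.rtri v s)
  | ltriL {t t' : C} (v : V) : StepC t t' → StepC (.ltri t v) (.ltri t' v)
  | ltriV {t : C} {v : V} (w : V) : StepV t v → StepC (.ltri t w) (.circ v w)
  | rtriR {s s' : C} (v : V) : StepC s s' → StepC (.rtri v s) (.rtri v s')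
  | rtriV {s : C} {w : V} (v : V) : StepV s w → StepC (.rtri v s) (.circ v w)
  | circ {v w : V} {t : C} : LStep v w t → StepC (.circ v w) t

/-- `t ⇒ t'` between computations. -/
def StepsC : C → C → Prop := Relation.ReflTransGen StepC

/-- `t ⇒ v`: `t` reduces in finitely many steps to the value `v`. -/
def StepsV (t : C) (v : V) : Prop := ∃ t', StepsC t t' ∧ StepV t' v

/-- `t⇓`: the computation `t` reduces to some value. -/
def ConvC (t : C) : Prop := ∃ v, StepsV t v

/-- Applicative simulations for xCL_fg. -/
def IsSim (RV : V → V → Prop) (RC : C → C → Prop) : Prop :=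
  (∀ v w, RV v w → ∀ u t, LStep v u t → ∃ s, LStep w u s ∧ RC t s) ∧
  (∀ t s, RC t s →
    (∀ v, StepV t v → ∃ w, StepsV s w ∧ RV v w) ∧
    (∀ t', StepC t t' → ∃ s', StepsC s s' ∧ RC t' s'))

/-- Applicative similarity on values. -/
def AppSimV (v w : V) : Prop := ∃ RV RC, IsSim RV RC ∧ RV v w

/-- Applicative similarity on computations. -/
def AppSimC (t s : C) : Prop := ∃ RV RC, IsSim RV RC ∧ RC t s

/-- A sorted relation is a congruence if it is compatible with all operators of both sorts. -/
def IsCong (RV : V → V → Prop) (RC : C → C → Prop) : Prop :=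
  RV .S .S ∧ RV .K .K ∧ RV .I .I ∧
  (∀ t s, RC t s → RV (.K1 t) (.K1 s)) ∧
  (∀ t s, RC t s → RV (.S1 t) (.S1 s)) ∧
  (∀ t s t' s', RC t s → RC t' s' → RV (.S2 t t') (.S2 s s')) ∧
  (∀ v w, RV v w → RC (.ret v) (.ret w)) ∧
  (∀ t s t' s', RC t s → RC t' s' → RC (.bull t t') (.bull s s')) ∧
  (∀ v w t s, RV v w → RC t s → RC (.rtri v t) (.rtri w s)) ∧
  (∀ v w t s, RV v w → RC t s → RC (.ltri t v) (.ltri s w)) ∧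
  (∀ v w v' w', RV v w → RV v' w' → RC (.circ v v') (.circ w w'))

/-- Containment in the preorder `O` (the value component of `O` is total). -/
def SubO (RV : V → V → Prop) (RC : C → C → Prop) : Prop :=
  (∀ v w, RV v w → True) ∧ (∀ t s, RC t s → ConvC t → ConvC s)

/-- The contextual preorder (value sort): the greatest congruence contained in `O`. -/
def CtxLeV (v w : V) : Prop := ∃ RV RC, IsCong RV RC ∧ SubO RV RC ∧ RV v w

/-- The contextual preorder (computation sort). -/
def CtxLeC (t s : C) : Prop := ∃ RV RC, IsCong RV RC ∧ SubO RV RC ∧ RC t s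

/-- The step-indexed approximations `Lⁿ = (Lⁿ_v, Lⁿ_c)`. -/
def LrelN : ℕ → (V → V → Prop) × (C → C → Prop)
  | 0 => (fun _ _ => True, fun _ _ => True)
  | n+1 =>
    ( fun v w => ∀ u z, (LrelN n).1 u z → ∀ t, LStep v u t →
        ∃ s, LStep w z s ∧ (LrelN n).2 t s,
      fun t s =>
        (∀ v, StepV t v → ∃ w, StepsV s w ∧ (LrelN n).1 v w) ∧
        (∀ t', StepC t t' → ∃ s', StepsC s s' ∧ (LrelN n).2 t' s') )

/-- The step-indexed logical relation, value sort: `L_v = ⋂ₙ Lⁿ_v`. -/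
def LV (v w : V) : Prop := ∀ n, (LrelN n).1 v w

/-- The step-indexed logical relation, computation sort: `L_c = ⋂ₙ Lⁿ_c`. -/
def LC (t s : C) : Prop := ∀ n, (LrelN n).2 t s

end FG
namespace FG

mutual
/-- Eta-closure relation on values. -/
inductive EV : V → V → Prop
  | S : EV .S .S
  | K : EV .K .K
  | I : EV .I .I
  | K1 {t s} : EC t s → EV (.K1 t) (.K1 s)
  | S1 {t s} : EC t s → EV (.S1 t) (.S1 s)
  | S2 {t s t' s'} : EC t s → EC t' s' → EV (.S2 t t') (.S2 s s')
  | eta1 {v w} : EV v w → EV v (.S2 (.ret (.K1 (.ret .I))) (.ret w))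
  | eta2 {v w} : EV v w → EV (.S2 (.ret (.K1 (.ret .I))) (.ret v)) w
/-- Eta-closure relation on computations. -/
inductive EC : C → C → Prop
  | ret {v w} : EV v w → EC (.ret v) (.ret w)
  | bull {t s t' s'} : EC t s → EC t' s' → EC (.bull t t') (.bull s s')
  | rtri {v w t s} : EV v w → EC t s → EC (.rtri v t) (.rtri w s)
  | ltri {v w t s} : EV v w → EC t s → EC (.ltri t v) (.ltri s w)
  | circ {v w v' w'} : EV v w → EV v' w' → EC (.circ v v') (.circ w w')
  | idL {t s} : EC t s → EC (.rtri .I t) s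
  | idR {t s} : EC t s → EC t (.rtri .I s)
  | expandL {t t' s} : StepC t t' → EC t' s → EC t s
end

mutual
theorem EV.refl : (v : V) → EV v v
  | .I => .I
  | .K => .K
  | .S => .S
  | .K1 t => .K1 (EC.refl t)
  | .S1 t => .S1 (EC.refl t)
  | .S2 t s => .S2 (EC.refl t) (EC.refl s)
theorem EC.refl : (t : C) → EC t t
  | .ret v => .ret (EV.refl v)
  | .bull t s => .bull (EC.refl t) (EC.refl s)
  | .rtri v s => .rtri (EV.refl v) (EC.refl s)
  | .ltri t v => .ltri (EV.refl v) (EC.refl t)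
  | .circ v w => .circ (EV.refl v) (EV.refl w)
end

theorem stepsC_bullL {t t'} (s : C) (h : StepsC t t') :
    StepsC (.bull t s) (.bull t' s) :=
  Relation.ReflTransGen.lift (fun x => C.bull x s) (fun _ _ h => StepC.bullL s h) _ _ h

theorem stepsC_ltriL {t t'} (v : V) (h : StepsC t t') :
    StepsC (.ltri t v) (.ltri t' v) :=
  Relation.ReflTransGen.lift (fun x => C.ltri x v) (fun _ _ h => StepC.ltriL v h) _ _ h

theorem stepsC_rtriR {s s'} (v : V) (h : StepsC s s') :
    StepsC (.rtri v s) (.rtri v s') :=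
  Relation.ReflTransGen.lift (fun x => C.rtri v x) (fun _ _ h => StepC.rtriR v h) _ _ h

theorem lstep_det {v u t t'} (h1 : LStep v u t) (h2 : LStep v u t') : t = t' := by
  cases h1 <;> cases h2 <;> rfl

theorem stepC_det {t a b} (h1 : StepC t a) (h2 : StepC t b) : a = b := by
  induction h1 generalizing b with
  | bullL s h ih =>
      cases h2 with
      | bullL s h' => rw [ih h']
      | bullV s h' => cases h'; exact absurd h (by intro h; nomatch h)
  | bullV s h =>
      cases h; cases h2 with
      | bullL s h' => nomatch h'
      | bullV s h' => cases h'; rfl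
  | ltriL v h ih =>
      cases h2 with
      | ltriL v h' => rw [ih h']
      | ltriV w h' => cases h'; exact absurd h (by intro h; nomatch h)
  | ltriV w h =>
      cases h; cases h2 with
      | ltriL v h' => nomatch h'
      | ltriV w h' => cases h'; rfl
  | rtriR v h ih =>
      cases h2 with
      | rtriR v h' => rw [ih h']
      | rtriV v h' => cases h'; exact absurd h (by intro h; nomatch h)
  | rtriV v h =>
      cases h; cases h2 with
      | rtriR v h' => nomatch h'
      | rtriV v h' => cases h'; rfl
  | circ h =>
      cases h2 with
      | circ h' => exact lstep_det h h'

/-- The key labeled-step simulation lemma for the eta closure. -/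
theorem lstep_sim : ∀ {v w u z t}, EV v w → EV u z → LStep v u t →
    ∃ s, StepsC (.circ w z) s ∧ EC t s
  | _, _, _, z, _, .S, hu, .S _ =>
      ⟨_, Relation.ReflTransGen.single (.circ (.S z)), .ret (.S1 (.ret hu))⟩
  | _, _, _, z, _, .K, hu, .K _ =>
      ⟨_, Relation.ReflTransGen.single (.circ (.K z)), .ret (.K1 (.ret hu))⟩
  | _, _, _, z, _, .I, hu, .I _ =>
      ⟨_, Relation.ReflTransGen.single (.circ (.I z)), .ret hu⟩
  | _, _, _, z, _, .K1 ht, _, .K1 _ _ =>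
      ⟨_, Relation.ReflTransGen.single (.circ (.K1 _ z)), ht⟩
  | _, _, _, z, _, .S1 ht, hu, .S1 _ _ =>
      ⟨_, Relation.ReflTransGen.single (.circ (.S1 _ z)), .ret (.S2 ht (.ret hu))⟩
  | _, _, _, z, _, .S2 ht ht', hu, .S2 _ _ _ =>
      ⟨_, Relation.ReflTransGen.single (.circ (.S2 _ _ z)),
        .bull (.ltri hu ht) (.ltri hu ht')⟩
  | _, _, _, z, _, .eta1 hv', hu, h => by
      obtain ⟨s, hs, hts⟩ := lstep_sim hv' hu h
      refine ⟨.rtri .I s, ?_, .idR hts⟩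
      refine Relation.ReflTransGen.head (.circ (.S2 _ _ z)) ?_
      refine Relation.ReflTransGen.head (.bullL _ (.ltriV z (.ret _))) ?_
      refine Relation.ReflTransGen.head (.bullL _ (.circ (.K1 _ z))) ?_
      refine Relation.ReflTransGen.head (.bullV _ (.ret .I)) ?_
      refine Relation.ReflTransGen.head (.rtriR .I (.ltriV z (.ret _))) ?_
      exact stepsC_rtriR .I hs
  | _, _, u, z, _, .eta2 hv', hu, .S2 _ _ _ => by
      refine ⟨.circ _ z, Relation.ReflTransGen.refl, ?_⟩
      refine .expandL (.bullL _ (.ltriV u (.ret _))) ?_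
      refine .expandL (.bullL _ (.circ (.K1 _ u))) ?_
      refine .expandL (.bullV _ (.ret .I)) ?_
      refine .idL ?_
      refine .expandL (.ltriV u (.ret _)) ?_
      exact .circ hv' hu

theorem valsim : ∀ {t s v}, EC t s → StepV t v → ∃ w, StepsV s w ∧ EV v w
  | _, _, _, .ret hvw, .ret _ =>
      ⟨_, ⟨_, Relation.ReflTransGen.refl, .ret _⟩, hvw⟩
  | _, _, _, .idR h, hv => by
      obtain ⟨w, ⟨s', h1, h2⟩, hw⟩ := valsim h hv
      cases h2
      refine ⟨w, ⟨_, ?_, .ret w⟩, hw⟩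
      refine Relation.ReflTransGen.trans (stepsC_rtriR .I h1) ?_
      refine Relation.ReflTransGen.head (.rtriV .I (.ret w)) ?_
      exact Relation.ReflTransGen.single (.circ (.I w))
  | _, _, _, .expandL hst _, hv => by cases hv; nomatch hst

theorem compsim : ∀ {t s t'}, EC t s → StepC t t' → ∃ s', StepsC s s' ∧ EC t' s'
  | _, _, _, .bull h1 h2, .bullL _ hs => by
      obtain ⟨s', hsteps, he⟩ := compsim h1 hs
      exact ⟨_, stepsC_bullL _ hsteps, .bull he h2⟩
  | _, _, _, .bull h1 h2, .bullV _ hs => by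
      obtain ⟨w, ⟨s', hs1, hs2⟩, hw⟩ := valsim h1 hs
      cases hs2
      exact ⟨_, Relation.ReflTransGen.tail (stepsC_bullL _ hs1) (.bullV _ (.ret w)),
        .rtri hw h2⟩
  | _, _, _, .rtri hv h2, .rtriR _ hs => by
      obtain ⟨s', hsteps, he⟩ := compsim h2 hs
      exact ⟨_, stepsC_rtriR _ hsteps, .rtri hv he⟩
  | _, _, _, .rtri hv h2, .rtriV _ hs => by
      obtain ⟨w, ⟨s', hs1, hs2⟩, hw⟩ := valsim h2 hs
      cases hs2
      exact ⟨_, Relation.ReflTransGen.tail (stepsC_rtriR _ hs1) (.rtriV _ (.ret w)),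
        .circ hv hw⟩
  | _, _, _, .ltri hv h2, .ltriL _ hs => by
      obtain ⟨s', hsteps, he⟩ := compsim h2 hs
      exact ⟨_, stepsC_ltriL _ hsteps, .ltri hv he⟩
  | _, _, _, .ltri hv h2, .ltriV _ hs => by
      obtain ⟨w', ⟨s', hs1, hs2⟩, hw⟩ := valsim h2 hs
      cases hs2
      exact ⟨_, Relation.ReflTransGen.tail (stepsC_ltriL _ hs1) (.ltriV _ (.ret w')),
        .circ hw hv⟩
  | _, _, _, .circ hv hv', .circ hl => lstep_sim hv hv' hl
  | _, _, _, .idL h, .rtriR _ hs => by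
      obtain ⟨s', hsteps, he⟩ := compsim h hs
      exact ⟨_, hsteps, .idL he⟩
  | _, _, _, .idL h, .rtriV _ hs => by
      obtain ⟨w, ⟨s', hs1, hs2⟩, hw⟩ := valsim h hs
      cases hs2
      exact ⟨_, hs1, .expandL (.circ (.I _)) (.ret hw)⟩
  | _, _, _, .idR h, hst => by
      obtain ⟨s', hsteps, he⟩ := compsim h hst
      exact ⟨_, stepsC_rtriR .I hsteps, .idR he⟩
  | _, _, _, .expandL hs h, hst => by
      cases stepC_det hs hst
      exact ⟨_, Relation.ReflTransGen.refl, h⟩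

theorem conv_transfer {t s t' v} (hsteps : StepsC t t') (hv : StepV t' v)
    (h : EC t s) : ConvC s := by
  induction hsteps using Relation.ReflTransGen.head_induction_on generalizing s with
  | refl =>
      obtain ⟨w, ⟨s', h1, h2⟩, _⟩ := valsim h hv
      exact ⟨w, s', h1, h2⟩
  | head hstep _ ih =>
      obtain ⟨s', hs, he⟩ := compsim h hstep
      obtain ⟨w, sF, h1, h2⟩ := ih he
      exact ⟨w, sF, hs.trans h1, h2⟩

theorem E_isCong : IsCong EV EC :=
  ⟨.S, .K, .I, fun _ _ h => .K1 h, fun _ _ h => .S1 h,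
   fun _ _ _ _ h h' => .S2 h h', fun _ _ h => .ret h,
   fun _ _ _ _ h h' => .bull h h', fun _ _ _ _ h h' => .rtri h h',
   fun _ _ _ _ h h' => .ltri h h', fun _ _ _ _ h h' => .circ h h'⟩

theorem E_subO : SubO EV EC :=
  ⟨fun _ _ _ => trivial, fun _ _ h hc => by
    obtain ⟨v, t', h1, h2⟩ := hc
    exact conv_transfer h1 h2 h⟩

end FG

open FG in
/-- η-law for xCL_fg (value form). -/
theorem fg_eta_law_value :
    ∀ v : V,
      CtxLeV v (.S2 (.ret (.K1 (.ret .I))) (.ret v)) ∧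
      CtxLeV (.S2 (.ret (.K1 (.ret .I))) (.ret v)) v := by
  intro v
  exact ⟨⟨EV, EC, E_isCong, E_subO, .eta1 (EV.refl v)⟩,
         ⟨EV, EC, E_isCong, E_subO, .eta2 (EV.refl v)⟩⟩
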